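/- For every nonzero rational number t, the point (-1, t) lies on the curve E_t, its double equals the point (0, 0), and it has order exactly 4 in the group E_t(ℚ). -/

import Mathlib

open WeierstrassCurve

/-- The elliptic curve `E_t : v² = u³ + (t² + 2)u² + u`. -/
noncomputable def Et (t : ℚ) : WeierstrassCurve.Affine ℚ :=
  { a₁ := 0, a₂ := t ^ 2 + 2, a₃ := 0, a₄ := 1, a₆ := 0 }

theorem stmt_0 (t : ℚ) (ht : t ≠ 0) :
    ∃ h : (Et t).Nonsingular (-1) t, ∃ h0 : (Et t).Nonsingular 0 0,
      (2 : ℤ) • (Affine.Point.some _ _ h) = Affine.Point.some _ _ h0 ∧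
        addOrderOf (Affine.Point.some _ _ h) = 4 := by
  have h : (Et t).Nonsingular (-1) t := by
    rw [Affine.nonsingular_iff, Affine.equation_iff]
    constructor
    · simp [Et]; ring
    · right
      simp [Et, Affine.negY]
      intro h
      exact ht (by linarith)
  have h0 : (Et t).Nonsingular 0 0 := by
    rw [Affine.nonsingular_iff, Affine.equation_iff]
    constructor
    · simp [Et]
    · left
      simp [Et]
  refine ⟨h, h0, ?_⟩
  have hy : t ≠ (Et t).negY (-1) t := by
    simp [Et, Affine.negY]
    intro hh
    exact ht (by linarith)
  have hslope : (Et t).slope (-1) (-1) t t = -t := by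
    rw [Affine.slope_of_Y_ne rfl hy]
    simp only [Et, Affine.negY]
    rw [div_eq_iff (by intro hh; exact ht (by linarith))]
    ring
  have hx : (Et t).addX (-1) (-1) ((Et t).slope (-1) (-1) t t) = 0 := by
    rw [hslope]; simp [Et, Affine.addX]; ring
  have hy3 : (Et t).addY (-1) (-1) t ((Et t).slope (-1) (-1) t t) = 0 := by
    rw [hslope]
    simp [Et, Affine.addY, Affine.negAddY, Affine.negY, Affine.addX]
    ring
  have hdouble : (2 : ℤ) • (Affine.Point.some _ _ h) = Affine.Point.some _ _ h0 := by
    rw [two_zsmul, Affine.Point.add_self_of_Y_ne hy]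
    simp only [hx, hy3]
  refine ⟨hdouble, ?_⟩
  have h4 : (2 ^ 2 : ℕ) • (Affine.Point.some _ _ h) = 0 := by
    have : ((2 ^ 2 : ℕ) : ℤ) • (Affine.Point.some _ _ h) = (2 : ℤ) • ((2 : ℤ) • Affine.Point.some _ _ h) := by
      rw [← mul_smul]; norm_num
    rw [← natCast_zsmul, this, hdouble, two_zsmul]
    exact Affine.Point.add_self_of_Y_eq (by simp [Et, Affine.negY])
  have h2 : ¬ (2 ^ 1 : ℕ) • (Affine.Point.some _ _ h) = 0 := by
    rw [pow_one, ← natCast_zsmul]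
    norm_num
    rw [hdouble]
    exact fun hh => Affine.Point.some_ne_zero _ hh
  haveI : Fact (Nat.Prime 2) := ⟨Nat.prime_two⟩
  simpa using addOrderOf_eq_prime_pow h2 h4
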